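/- Corollary (closedness propagates along a hereditary operator): if R is hereditary (N_R = 0) and Ω₀ is a 2-form compatible with R such that dΩ₀ = 0 and d(Ω₀∘R) = 0, then d(Ω₀∘Rⁿ) = 0 for all n ≥ 0. -/
import Mathlib


/-- The Chevalley–Eilenberg differential of a 2-form:
`dΩ(x,y,z) = xΩ(y,z) − yΩ(x,z) + zΩ(x,y) − Ω([x,y],z) + Ω([x,z],y) − Ω([y,z],x)`. -/
def ceDiff2 {F X : Type*} [Ring F] [LieRing X]
    (ρ : X → F → F) (Ω : X → X → F) : X → X → X → F :=
  fun x y z =>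
    ρ x (Ω y z) - ρ y (Ω x z) + ρ z (Ω x y)
    - Ω ⁅x, y⁆ z + Ω ⁅x, z⁆ y - Ω ⁅y, z⁆ x

/-- Key identity (the "previous lemma"): for a hereditary `R` and a 2-form `η`
compatible with `R`,
`3·d(ηR²)(x,y,z) = 2·(d(ηR)(Rx,y,z)+d(ηR)(x,Ry,z)+d(ηR)(x,y,Rz))
  − (dη(Rx,Ry,z)+dη(Rx,y,Rz)+dη(x,Ry,Rz))`. -/
lemma key_identity {F X : Type*} [CommRing F] [LieRing X] [Module F X]
    (ρ : X → F → F) (R : X →ₗ[F] X)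
    (hR : ∀ x y : X,
      ⁅R x, R y⁆ - R ⁅R x, y⁆ - R ⁅x, R y⁆ + R (R ⁅x, y⁆) = 0)
    (η : X →ₗ[F] X →ₗ[F] F)
    (hc : ∀ u v : X, η (R u) v = η u (R v))
    (x y z : X) :
    ceDiff2 ρ (fun a b => η (R (R a)) b) x y z
      + ceDiff2 ρ (fun a b => η (R (R a)) b) x y z
      + ceDiff2 ρ (fun a b => η (R (R a)) b) x y z
    = (ceDiff2 ρ (fun a b => η (R a) b) (R x) y z
        + ceDiff2 ρ (fun a b => η (R a) b) x (R y) z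
        + ceDiff2 ρ (fun a b => η (R a) b) x y (R z))
      + (ceDiff2 ρ (fun a b => η (R a) b) (R x) y z
        + ceDiff2 ρ (fun a b => η (R a) b) x (R y) z
        + ceDiff2 ρ (fun a b => η (R a) b) x y (R z))
      - (ceDiff2 ρ (fun a b => η a b) (R x) (R y) z
        + ceDiff2 ρ (fun a b => η a b) (R x) y (R z)
        + ceDiff2 ρ (fun a b => η a b) x (R y) (R z)) := by
  have her : ∀ u v : X, ⁅R u, R v⁆ = R ⁅R u, v⁆ + R ⁅u, R v⁆ - R (R ⁅u, v⁆) := by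
    intro u v
    have h := hR u v
    have h2 : ⁅R u, R v⁆ - (R ⁅R u, v⁆ + R ⁅u, R v⁆ - R (R ⁅u, v⁆)) = 0 := by
      rw [← h]; abel
    exact sub_eq_zero.mp h2
  have hc' : ∀ u v : X, η u (R v) = η (R u) v := fun u v => (hc u v).symm
  simp only [ceDiff2, her, map_add, map_sub, LinearMap.add_apply,
    LinearMap.sub_apply, hc']
  ring

/-- Closedness propagates along a hereditary operator: if `R` is hereditary and
`Ω₀` is a compatible 2-form with `dΩ₀ = 0` and `d(Ω₀∘R) = 0`, then
`d(Ω₀∘Rⁿ) = 0` for all `n ≥ 0`. -/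
theorem closedness_propagates
    {F X : Type*} [CommRing F] [Algebra ℝ F] [LieRing X] [LieAlgebra ℝ X]
    [Module F X]
    (ρ : X → F → F)
    (hρadd : ∀ (x : X) (a b : F), ρ x (a + b) = ρ x a + ρ x b)
    (hρderiv : ∀ (x : X) (a b : F), ρ x (a * b) = ρ x a * b + a * ρ x b)
    (hρlie : ∀ (x y : X) (a : F), ρ ⁅x, y⁆ a = ρ x (ρ y a) - ρ y (ρ x a))
    (hρaddX : ∀ (x y : X) (a : F), ρ (x + y) a = ρ x a + ρ y a)
    (hρsmulX : ∀ (a : F) (x : X) (b : F), ρ (a • x) b = a * ρ x b)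
    (hlie_smul : ∀ (x : X) (a : F) (y : X),
      ⁅x, a • y⁆ = a • ⁅x, y⁆ + ρ x a • y)
    (R : X →ₗ[F] X)
    -- R is hereditary
    (hR : ∀ x y : X,
      ⁅R x, R y⁆ - R ⁅R x, y⁆ - R ⁅x, R y⁆ + R (R ⁅x, y⁆) = 0)
    (Ω : X →ₗ[F] X →ₗ[F] F)
    -- Ω is alternating and compatible with R
    (halt : ∀ x : X, Ω x x = 0)
    (hcompat : ∀ x y : X, Ω (R x) y = Ω x (R y))
    -- dΩ₀ = 0 and d(Ω₀∘R) = 0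
    (hd0 : ∀ x y z : X, ceDiff2 ρ (fun a b => Ω a b) x y z = 0)
    (hd1 : ∀ x y z : X, ceDiff2 ρ (fun a b => Ω (R a) b) x y z = 0) :
    ∀ (n : ℕ) (x y z : X),
      ceDiff2 ρ (fun a b => Ω ((R ^ n) a) b) x y z = 0 := by
  have hcomm : ∀ (n : ℕ) (u : X), (R ^ n) (R u) = R ((R ^ n) u) := by
    intro n u
    have h : R ^ n * R = R * R ^ n := ((Commute.refl R).pow_left n).eq
    have h' := LinearMap.congr_fun h u
    simpa [Module.End.mul_apply] using h'
  suffices H : ∀ n : ℕ,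
      (∀ x y z : X, ceDiff2 ρ (fun a b => Ω ((R ^ n) a) b) x y z = 0) ∧
      (∀ x y z : X, ceDiff2 ρ (fun a b => Ω ((R ^ (n + 1)) a) b) x y z = 0) by
    exact fun n => (H n).1
  intro n
  induction n with
  | zero =>
    constructor
    · intro x y z
      simpa [ceDiff2] using hd0 x y z
    · intro x y z
      simpa [ceDiff2, pow_one] using hd1 x y z
  | succ n ih =>
    refine ⟨ih.2, ?_⟩
    intro x y z
    set η : X →ₗ[F] X →ₗ[F] F := Ω ∘ₗ (R ^ n) with hη
    have hcη : ∀ u v : X, η (R u) v = η u (R v) := by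
      intro u v
      simp only [hη, LinearMap.comp_apply, hcomm n u]
      exact hcompat ((R ^ n) u) v
    have e2 : (fun a b => Ω ((R ^ (n + 1 + 1)) a) b) = (fun a b => η (R (R a)) b) := by
      funext a b
      simp [hη, pow_succ, Module.End.mul_apply]
    have e1 : (fun a b => Ω ((R ^ (n + 1)) a) b) = (fun a b => η (R a) b) := by
      funext a b
      simp [hη, pow_succ, Module.End.mul_apply]
    have e0 : (fun a b => Ω ((R ^ n) a) b) = (fun a b => η a b) := by
      funext a b
      simp [hη]
    have hA := ih.2
    rw [e1] at hA
    have hB := ih.1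
    rw [e0] at hB
    have hk := key_identity ρ R hR η hcη x y z
    simp only [hA, hB, add_zero, zero_add, sub_zero] at hk
    rw [e2]
    have h3 : (3 : ℝ) • ceDiff2 ρ (fun a b => η (R (R a)) b) x y z = 0 := by
      rw [show (3 : ℝ) = 1 + 1 + 1 by norm_num, add_smul, add_smul, one_smul]
      simpa using hk
    have h4 := congrArg (fun t => (3⁻¹ : ℝ) • t) h3
    simp only [smul_smul, smul_zero] at h4
    norm_num at h4
    exact h4
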